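/- Let y ∈ ℝⁿ, X ∈ ℝ^{n×p}, λ > 0, k ∈ {0,1,…,p}, and let r be any norm on ℝ^p. Let U_k^λ = {Δ ∈ ℝ^{n×p} : Δ has at most k nonzero columns and ‖Δᵢ‖₂ ≤ λ for all i}. Then the problem min over β of (min over Δ ∈ U_k^λ of ‖y − (X + Δ)β‖₂) + r(β) has the same optimal value and the same set of optimal solutions as the constrained problem: minimize ‖y − Xβ‖₂ + r(β) − λ Σ_{i=1}^k |β_(i)| over β ∈ ℝ^p subject to λ Σ_{i=1}^k |β_(i)| ≤ ‖y − Xβ‖₂. -/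

import Mathlib

open Finset

/-- Absolute values of the entries of `β`, sorted in increasing order. -/
noncomputable def sortAbs {p : ℕ} (β : Fin p → ℝ) : Fin p → ℝ :=
  fun i => |β (Tuple.sort (fun j => |β j|) i)|

/-- `∑_{i=1}^k |β_(i)|`: the sum of the `k` largest absolute values of entries of `β`. -/
noncomputable def topSum {p : ℕ} (k : ℕ) (β : Fin p → ℝ) : ℝ :=
  ∑ i ∈ Finset.univ.filter (fun i : Fin p => p - k ≤ (i : ℕ)), sortAbs β i

/-- The Euclidean norm of a vector. -/
noncomputable def norm2 {m : ℕ} (v : Fin m → ℝ) : ℝ := Real.sqrt (∑ i, v i ^ 2)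

/-- The uncertainty set `U_k^λ`: matrices with at most `k` nonzero columns, each
column of Euclidean norm at most `λ`. -/
noncomputable def kColBound {n p : ℕ} (k : ℕ) (lam : ℝ) : Set (Matrix (Fin n) (Fin p) ℝ) :=
  {Δ | (Finset.univ.filter (fun i : Fin p => ∃ j, Δ j i ≠ 0)).card ≤ k ∧
    ∀ i : Fin p, norm2 (fun j => Δ j i) ≤ lam}

/-- The min-min robust objective `β ↦ (min_{Δ ∈ U_k^λ} ‖y - (X+Δ)β‖₂) + r(β)`. -/
noncomputable def minminObj {n p : ℕ} (y : Fin n → ℝ) (X : Matrix (Fin n) (Fin p) ℝ)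
    (k : ℕ) (lam : ℝ) (r : (Fin p → ℝ) → ℝ) (β : Fin p → ℝ) : ℝ :=
  sInf {v : ℝ | ∃ Δ ∈ kColBound (n := n) (p := p) k lam,
    v = norm2 (y - (X + Δ).mulVec β)} + r β

section Aux
variable {n p : ℕ}

lemma norm2_eq {m : ℕ} (v : Fin m → ℝ) :
    norm2 v = ‖(WithLp.equiv 2 (Fin m → ℝ)).symm v‖ := by
  rw [EuclideanSpace.norm_eq]
  simp [norm2, sq_abs, WithLp.equiv_symm_apply, PiLp.toLp_apply]

lemma norm2_nonneg {m : ℕ} (v : Fin m → ℝ) : 0 ≤ norm2 v := Real.sqrt_nonneg _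

lemma norm2_smul {m : ℕ} (c : ℝ) (v : Fin m → ℝ) : norm2 (c • v) = |c| * norm2 v := by
  rw [norm2_eq, norm2_eq, WithLp.equiv_symm_apply, WithLp.toLp_smul, norm_smul, Real.norm_eq_abs]

lemma norm2_sub_le {m : ℕ} (a b : Fin m → ℝ) : norm2 a - norm2 b ≤ norm2 (a - b) := by
  rw [norm2_eq, norm2_eq, norm2_eq, WithLp.equiv_symm_apply, WithLp.toLp_sub]
  exact norm_sub_norm_le _ _

lemma norm2_sum_le {m : ℕ} {ι : Type*} (s : Finset ι) (f : ι → (Fin m → ℝ)) :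
    norm2 (∑ i ∈ s, f i) ≤ ∑ i ∈ s, norm2 (f i) := by
  simp_rw [norm2_eq]
  rw [show (WithLp.equiv 2 (Fin m → ℝ)).symm (∑ i ∈ s, f i)
      = ∑ i ∈ s, (WithLp.equiv 2 (Fin m → ℝ)).symm (f i) from map_sum (WithLp.linearEquiv 2 ℝ (Fin m → ℝ)).symm f s]
  exact norm_sum_le _ _

lemma card_top {p k : ℕ} (hk : k ≤ p) :
    (Finset.univ.filter (fun i : Fin p => p - k ≤ (i : ℕ))).card = k := by
  rcases Nat.eq_zero_or_pos k with rfl | hk0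
  · rw [Finset.card_eq_zero, Finset.filter_eq_empty_iff]
    exact fun i _ h => by have := i.isLt; omega
  · have hp0 : 0 < p := lt_of_lt_of_le hk0 hk
    have he : (Finset.univ.filter (fun i : Fin p => p - k ≤ (i : ℕ)))
        = Finset.Ici (⟨p - k, by omega⟩ : Fin p) := by
      ext i; simp [Fin.le_def]
    rw [he, Fin.card_Ici]
    show p - (p - k) = k
    omega

lemma monotone_sortAbs {p : ℕ} (β : Fin p → ℝ) : Monotone (sortAbs β) :=
  Tuple.monotone_sort (fun j => |β j|)

lemma sortAbs_nonneg {p : ℕ} (β : Fin p → ℝ) (i : Fin p) : 0 ≤ sortAbs β i := abs_nonneg _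

lemma sum_le_sum_top {p k : ℕ} (hk : k ≤ p) (g : Fin p → ℝ) (hg : Monotone g)
    (hg0 : ∀ i, 0 ≤ g i) (A : Finset (Fin p)) (hA : A.card ≤ k) :
    ∑ j ∈ A, g j ≤ ∑ j ∈ Finset.univ.filter (fun i : Fin p => p - k ≤ (i : ℕ)), g j := by
  set Sk := Finset.univ.filter (fun i : Fin p => p - k ≤ (i : ℕ)) with hSk
  have hcardSk : Sk.card = k := card_top hk
  have hsplitA : ∑ j ∈ A ∩ Sk, g j + ∑ j ∈ A \ Sk, g j = ∑ j ∈ A, g j :=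
    Finset.sum_inter_add_sum_sdiff A Sk g
  have hsplitS : ∑ j ∈ Sk ∩ A, g j + ∑ j ∈ Sk \ A, g j = ∑ j ∈ Sk, g j :=
    Finset.sum_inter_add_sum_sdiff Sk A g
  have hIcomm : A ∩ Sk = Sk ∩ A := Finset.inter_comm _ _
  have hcards : (A \ Sk).card ≤ (Sk \ A).card := by
    have h1 : (A ∩ Sk).card + (A \ Sk).card = A.card := Finset.card_inter_add_card_sdiff A Sk
    have h2 : (Sk ∩ A).card + (Sk \ A).card = Sk.card := Finset.card_inter_add_card_sdiff Sk A
    rw [hIcomm] at h1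
    omega
  obtain ⟨B, hBsub, hBcard⟩ := Finset.exists_subset_card_eq hcards
  have key : ∑ j ∈ A \ Sk, g j ≤ ∑ j ∈ B, g j := by
    have hcard' : Fintype.card ↥(A \ Sk) = Fintype.card ↥B := by
      rw [Fintype.card_coe, Fintype.card_coe, hBcard]
    let e : ↥(A \ Sk) ≃ ↥B := Fintype.equivOfCardEq hcard'
    have hle : ∀ x : ↥(A \ Sk), g x.1 ≤ g (e x).1 := by
      intro x
      apply hg
      have hx : x.1 ∉ Sk := (Finset.mem_sdiff.1 x.2).2
      have hy : (e x).1 ∈ Sk := hBsub (e x).2 |> fun h => (Finset.mem_sdiff.1 h).1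
      have hx' : ¬ p - k ≤ (x.1 : ℕ) := fun h => hx (Finset.mem_filter.2 ⟨Finset.mem_univ _, h⟩)
      have hy' : p - k ≤ ((e x).1 : ℕ) := (Finset.mem_filter.1 hy).2
      exact Fin.le_def.2 (by omega)
    calc ∑ j ∈ A \ Sk, g j = ∑ x : ↥(A \ Sk), g x.1 := (Finset.sum_coe_sort _ g).symm
      _ ≤ ∑ x : ↥(A \ Sk), g (e x).1 := Finset.sum_le_sum fun x _ => hle x
      _ = ∑ y : ↥B, g y.1 := Equiv.sum_comp e (fun y => g y.1)
      _ = ∑ j ∈ B, g j := Finset.sum_coe_sort _ g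
  have hB2 : ∑ j ∈ B, g j ≤ ∑ j ∈ Sk \ A, g j :=
    Finset.sum_le_sum_of_subset_of_nonneg hBsub (fun i _ _ => hg0 i)
  calc ∑ j ∈ A, g j = ∑ j ∈ Sk ∩ A, g j + ∑ j ∈ A \ Sk, g j := by rw [← hsplitA, hIcomm]
    _ ≤ ∑ j ∈ Sk ∩ A, g j + ∑ j ∈ Sk \ A, g j := by linarith
    _ = ∑ j ∈ Sk, g j := hsplitS

lemma topSum_exists {p k : ℕ} (hk : k ≤ p) (β : Fin p → ℝ) :
    ∃ T : Finset (Fin p), T.card = k ∧ topSum k β = ∑ i ∈ T, |β i| := by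
  set σ := Tuple.sort (fun j => |β j|)
  refine ⟨(Finset.univ.filter (fun i : Fin p => p - k ≤ (i : ℕ))).map σ.toEmbedding, ?_, ?_⟩
  · rw [Finset.card_map]; exact card_top hk
  · rw [Finset.sum_map]
    rfl

lemma sum_abs_le_topSum {p k : ℕ} (hk : k ≤ p) (β : Fin p → ℝ) (T : Finset (Fin p))
    (hT : T.card ≤ k) : ∑ i ∈ T, |β i| ≤ topSum k β := by
  set σ := Tuple.sort (fun j => |β j|)
  have h1 : ∑ i ∈ T, |β i| = ∑ j ∈ T.map σ.symm.toEmbedding, sortAbs β j := by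
    rw [Finset.sum_map]
    simp [sortAbs, σ]
  rw [h1]
  exact sum_le_sum_top hk (sortAbs β) (monotone_sortAbs β) (sortAbs_nonneg β) _
    (by rw [Finset.card_map]; exact hT)

lemma topSum_nonneg {p k : ℕ} (β : Fin p → ℝ) : 0 ≤ topSum k β :=
  Finset.sum_nonneg fun i _ => sortAbs_nonneg β i

lemma topSum_smul {p k : ℕ} (hk : k ≤ p) (t : ℝ) (ht : 0 ≤ t) (β : Fin p → ℝ) :
    topSum k (t • β) = t * topSum k β := by
  obtain ⟨T1, hT1c, hT1⟩ := topSum_exists hk (t • β)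
  obtain ⟨T0, hT0c, hT0⟩ := topSum_exists hk β
  have e1 : ∀ i, |(t • β) i| = t * |β i| := fun i => by
    simp [abs_mul, abs_of_nonneg ht]
  apply le_antisymm
  · rw [hT1]
    calc ∑ i ∈ T1, |(t • β) i| = t * ∑ i ∈ T1, |β i| := by
          simp_rw [e1]; rw [Finset.mul_sum]
      _ ≤ t * topSum k β :=
          mul_le_mul_of_nonneg_left (sum_abs_le_topSum hk β T1 hT1c.le) ht
  · calc t * topSum k β = ∑ i ∈ T0, |(t • β) i| := by
          rw [hT0]; simp_rw [e1]; rw [Finset.mul_sum]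
      _ ≤ topSum k (t • β) := sum_abs_le_topSum hk (t • β) T0 hT0c.le

lemma norm2_zero {m : ℕ} : norm2 (0 : Fin m → ℝ) = 0 := by
  have := norm2_smul (0 : ℝ) (0 : Fin m → ℝ)
  simpa using this

lemma zero_mem_kColBound {k : ℕ} {lam : ℝ} (hlam : 0 ≤ lam) :
    (0 : Matrix (Fin n) (Fin p) ℝ) ∈ kColBound (n := n) (p := p) k lam := by
  constructor
  · have : (Finset.univ.filter (fun i : Fin p => ∃ j, (0 : Matrix (Fin n) (Fin p) ℝ) j i ≠ 0)) = ∅ := by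
      rw [Finset.filter_eq_empty_iff]; intro i _; push_neg; intro j; rfl
    rw [this]; simp
  · intro i
    have : (fun j => (0 : Matrix (Fin n) (Fin p) ℝ) j i) = (0 : Fin n → ℝ) := rfl
    rw [this, norm2_zero]; exact hlam

lemma mulVec_cols (Δ : Matrix (Fin n) (Fin p) ℝ) (β : Fin p → ℝ) :
    Δ.mulVec β = ∑ i, β i • (fun j => Δ j i) := by
  funext j
  simp [Matrix.mulVec, dotProduct, Finset.sum_apply, mul_comm]

lemma norm2_mulVec_le {k : ℕ} {lam : ℝ} (hk : k ≤ p) (hlam : 0 ≤ lam)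
    {Δ : Matrix (Fin n) (Fin p) ℝ} (hΔ : Δ ∈ kColBound (n := n) (p := p) k lam)
    (β : Fin p → ℝ) : norm2 (Δ.mulVec β) ≤ lam * topSum k β := by
  obtain ⟨hcard, hcol⟩ := hΔ
  set J := Finset.univ.filter (fun i : Fin p => ∃ j, Δ j i ≠ 0) with hJ
  have hcols : Δ.mulVec β = ∑ i ∈ J, β i • (fun j => Δ j i) := by
    rw [mulVec_cols]
    symm
    apply Finset.sum_subset (Finset.subset_univ J)
    intro i _ hiJ
    have : ∀ j, Δ j i = 0 := by
      intro j
      by_contra h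
      exact hiJ (Finset.mem_filter.2 ⟨Finset.mem_univ _, ⟨j, h⟩⟩)
    funext j
    simp [this]
  calc norm2 (Δ.mulVec β) ≤ ∑ i ∈ J, norm2 (β i • (fun j => Δ j i)) := by
        rw [hcols]; exact norm2_sum_le _ _
    _ = ∑ i ∈ J, |β i| * norm2 (fun j => Δ j i) := by simp_rw [norm2_smul]
    _ ≤ ∑ i ∈ J, |β i| * lam := Finset.sum_le_sum fun i _ =>
        mul_le_mul_of_nonneg_left (hcol i) (abs_nonneg _)
    _ = lam * ∑ i ∈ J, |β i| := by rw [← Finset.sum_mul, mul_comm]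
    _ ≤ lam * topSum k β :=
        mul_le_mul_of_nonneg_left (sum_abs_le_topSum hk β J hcard) hlam

/-- sign helper -/
noncomputable def rsign (x : ℝ) : ℝ := if x < 0 then -1 else if 0 < x then 1 else 0

lemma mul_rsign (x : ℝ) : x * rsign x = |x| := by
  unfold rsign
  rcases lt_trichotomy x 0 with h | h | h
  · rw [if_pos h, abs_of_neg h]; ring
  · simp [h]
  · rw [if_neg (not_lt.2 h.le), if_pos h, abs_of_pos h]; ring

lemma abs_rsign_le (x : ℝ) : |rsign x| ≤ 1 := by
  unfold rsign
  split_ifs <;> simp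

lemma inner_val {k : ℕ} (hk : k ≤ p) {lam : ℝ} (hlam : 0 < lam)
    (z : Fin n → ℝ) (β : Fin p → ℝ) :
    sInf {v : ℝ | ∃ Δ ∈ kColBound (n := n) (p := p) k lam, v = norm2 (z - Δ.mulVec β)}
      = max (norm2 z - lam * topSum k β) 0 := by
  set S := topSum k β with hS
  have hS0 : 0 ≤ S := topSum_nonneg β
  have hlb : ∀ v ∈ {v : ℝ | ∃ Δ ∈ kColBound (n := n) (p := p) k lam,
      v = norm2 (z - Δ.mulVec β)}, max (norm2 z - lam * S) 0 ≤ v := by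
    rintro v ⟨Δ, hΔ, rfl⟩
    apply max_le
    · calc norm2 z - lam * S ≤ norm2 z - norm2 (Δ.mulVec β) := by
            have := norm2_mulVec_le hk hlam.le hΔ β; linarith
        _ ≤ norm2 (z - Δ.mulVec β) := norm2_sub_le _ _
    · exact norm2_nonneg _
  have hne : {v : ℝ | ∃ Δ ∈ kColBound (n := n) (p := p) k lam,
      v = norm2 (z - Δ.mulVec β)}.Nonempty :=
    ⟨_, ⟨0, zero_mem_kColBound hlam.le, by rw [Matrix.zero_mulVec, sub_zero]⟩⟩
  -- construct the optimal Δ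
  obtain ⟨T, hTcard, hTsum⟩ := topSum_exists hk β
  have hach : max (norm2 z - lam * S) 0 ∈ {v : ℝ | ∃ Δ ∈ kColBound (n := n) (p := p) k lam,
      v = norm2 (z - Δ.mulVec β)} := by
    rcases eq_or_lt_of_le hS0 with hSz | hSpos
    · -- S = 0
      refine ⟨0, zero_mem_kColBound hlam.le, ?_⟩
      rw [Matrix.zero_mulVec, sub_zero, ← hSz]
      simp [max_eq_left (norm2_nonneg z)]
    · -- S > 0
      set c : ℝ := if lam * S ≤ norm2 z then lam / norm2 z else 1 / S with hc
      set Δ : Matrix (Fin n) (Fin p) ℝ := fun j i => if i ∈ T then c * rsign (β i) * z j else 0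
        with hΔdef
      have hcol : ∀ i, (fun j => Δ j i) = if i ∈ T then (c * rsign (β i)) • z else 0 := by
        intro i
        funext j
        by_cases hi : i ∈ T <;> simp [hΔdef, hi]
      have hcnn : 0 ≤ c := by
        rw [hc]; split_ifs with h
        · exact div_nonneg hlam.le (norm2_nonneg z)
        · positivity
      have hcolnorm : ∀ i, norm2 (fun j => Δ j i) ≤ lam := by
        intro i
        rw [hcol i]
        by_cases hi : i ∈ T
        · rw [if_pos hi, norm2_smul, abs_mul, abs_of_nonneg hcnn]
          have h1 : |rsign (β i)| ≤ 1 := abs_rsign_le _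
          have h2 : c * |rsign (β i)| * norm2 z ≤ c * norm2 z := by
            have h3 := mul_le_mul_of_nonneg_right
              (mul_le_mul_of_nonneg_left h1 hcnn) (norm2_nonneg z)
            simpa using h3
          refine le_trans h2 ?_
          rw [hc]; split_ifs with h
          · rcases eq_or_lt_of_le (norm2_nonneg z) with hz | hz
            · rw [← hz]; simpa using hlam.le
            · rw [div_mul_cancel₀ _ hz.ne']
          · push_neg at h
            rw [div_mul_eq_mul_div, one_mul, div_le_iff₀ hSpos]
            linarith
        · rw [if_neg hi, norm2_zero]; exact hlam.le
      have hmem : Δ ∈ kColBound (n := n) (p := p) k lam := by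
        constructor
        · refine le_trans (Finset.card_le_card ?_) hTcard.le
          intro i hi
          obtain ⟨-, j, hj⟩ := Finset.mem_filter.1 hi
          by_contra hiT
          exact hj (by simp [hΔdef, hiT])
        · exact hcolnorm
      have hmv : Δ.mulVec β = (c * S) • z := by
        rw [mulVec_cols]
        have : ∀ i, β i • (fun j => Δ j i) = if i ∈ T then (c * |β i|) • z else 0 := by
          intro i
          rw [hcol i]
          by_cases hi : i ∈ T
          · rw [if_pos hi, if_pos hi, smul_smul]
            congr 1
            rw [← mul_rsign (β i)]; ring
          · simp [hi]
        simp_rw [this]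
        rw [Finset.sum_ite_mem, Finset.univ_inter, ← Finset.sum_smul]
        congr 1
        rw [← Finset.mul_sum, ← hTsum, ← hS]
      refine ⟨Δ, hmem, ?_⟩
      rw [hmv]
      have : z - (c * S) • z = (1 - c * S) • z := by
        rw [sub_smul, one_smul]
      rw [this, norm2_smul]
      rw [hc]
      split_ifs with h
      · rcases eq_or_lt_of_le (norm2_nonneg z) with hz | hz
        · rw [← hz] at h ⊢
          have : lam * S = 0 := le_antisymm h (by positivity)
          simp [this]
        · rw [max_eq_left (by linarith), div_mul_eq_mul_div]
          have habs : |1 - lam * S / norm2 z| = 1 - lam * S / norm2 z :=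
            abs_of_nonneg (by rw [sub_nonneg, div_le_one hz]; exact h)
          rw [habs, sub_mul, one_mul, div_mul_cancel₀ _ hz.ne']
      · push_neg at h
        rw [one_div, inv_mul_cancel₀ hSpos.ne', sub_self, abs_zero, zero_mul]
        rw [max_eq_right (by linarith)]
  apply le_antisymm
  · exact csInf_le ⟨0, fun v hv => le_trans (le_max_right _ _) (hlb v hv)⟩ hach
  · exact le_csInf hne hlb
end Aux

/-- Theorem 3.1: for any norm `r`, the min-min robust problem
`min_β min_{Δ ∈ U_k^λ} ‖y - (X+Δ)β‖₂ + r(β)` has the same optimal value and the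
same set of optimal solutions as the constrained problem
`min ‖y - Xβ‖₂ + r(β) - λ∑_{i=1}^k |β_(i)|  s.t.  λ∑_{i=1}^k |β_(i)| ≤ ‖y - Xβ‖₂`. -/
theorem minmin_robust_as_constrained {n p : ℕ} (y : Fin n → ℝ)
    (X : Matrix (Fin n) (Fin p) ℝ) (lam : ℝ) (hlam : 0 < lam) (k : ℕ) (hk : k ≤ p)
    (r : (Fin p → ℝ) → ℝ)
    (hr_add : ∀ a b, r (a + b) ≤ r a + r b)
    (hr_smul : ∀ (c : ℝ) a, r (c • a) = |c| * r a)
    (hr_def : ∀ a, r a = 0 → a = 0) :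
    sInf {v : ℝ | ∃ β : Fin p → ℝ, v = minminObj y X k lam r β} =
      sInf {v : ℝ | ∃ β : Fin p → ℝ,
        lam * topSum k β ≤ norm2 (y - X.mulVec β) ∧
        v = norm2 (y - X.mulVec β) + r β - lam * topSum k β} ∧
    {β : Fin p → ℝ | ∀ β' : Fin p → ℝ,
        minminObj y X k lam r β ≤ minminObj y X k lam r β'} =
      {β : Fin p → ℝ | lam * topSum k β ≤ norm2 (y - X.mulVec β) ∧
        ∀ β' : Fin p → ℝ, lam * topSum k β' ≤ norm2 (y - X.mulVec β') →
          norm2 (y - X.mulVec β) + r β - lam * topSum k β ≤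
            norm2 (y - X.mulVec β') + r β' - lam * topSum k β'} := by
  -- basic facts about r
  have hr0 : r 0 = 0 := by
    have h := hr_smul 0 0
    simpa using h
  have hrnn : ∀ a, 0 ≤ r a := by
    intro a
    have h1 := hr_add a (-a)
    have h2 : r (-a) = r a := by
      have h := hr_smul (-1) a
      simpa using h
    rw [add_neg_cancel, hr0, h2] at h1
    linarith
  have htop0 : topSum k (0 : Fin p → ℝ) = 0 := by
    have h := topSum_smul (p := p) hk 0 le_rfl 0
    simpa using h
  -- closed form of the min-min objective
  have hobj : ∀ β, minminObj y X k lam r β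
      = max (norm2 (y - X.mulVec β) - lam * topSum k β) 0 + r β := by
    intro β
    unfold minminObj
    congr 1
    have hdiff : ∀ Δ : Matrix (Fin n) (Fin p) ℝ,
        y - (X + Δ).mulVec β = (y - X.mulVec β) - Δ.mulVec β := by
      intro Δ
      rw [Matrix.add_mulVec, sub_add_eq_sub_sub]
    simp_rw [hdiff]
    exact inner_val hk hlam (y - X.mulVec β) β
  -- objective is nonnegative
  have hfnn : ∀ β, 0 ≤ minminObj y X k lam r β := by
    intro β
    rw [hobj]
    have := hrnn β
    have := le_max_right (norm2 (y - X.mulVec β) - lam * topSum k β) (0 : ℝ)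
    linarith
  -- value on feasible points
  have hfeq : ∀ β, lam * topSum k β ≤ norm2 (y - X.mulVec β) →
      minminObj y X k lam r β = norm2 (y - X.mulVec β) + r β - lam * topSum k β := by
    intro β hfeas
    rw [hobj, max_eq_left (by linarith)]
    ring
  -- dominance: every infeasible point is strictly dominated by a feasible one
  have hdom : ∀ β, norm2 (y - X.mulVec β) < lam * topSum k β →
      ∃ β₀, lam * topSum k β₀ ≤ norm2 (y - X.mulVec β₀) ∧
        minminObj y X k lam r β₀ < minminObj y X k lam r β := by
    intro β hβ
    set w := X.mulVec β with hw
    set c := lam * topSum k β with hcdef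
    set ψ : ℝ → ℝ := fun t => norm2 (y - t • w) - t * c with hψ
    have hψc : Continuous ψ := by
      have he : ψ = fun t => Real.sqrt (∑ i, (y i - t * w i) ^ 2) - t * c := by
        funext t
        simp [hψ, norm2]
      rw [he]
      apply Continuous.sub
      · exact Real.continuous_sqrt.comp (by continuity)
      · continuity
    have hψ0 : 0 ≤ ψ 0 := by
      simp only [hψ, zero_smul, sub_zero, zero_mul]
      exact norm2_nonneg _
    have hψ1 : ψ 1 < 0 := by
      simp only [hψ, one_smul, one_mul]
      linarith
    obtain ⟨t, ht01, htz⟩ : ∃ t ∈ Set.Icc (0:ℝ) 1, ψ t = 0 := by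
      have h0mem : (0:ℝ) ∈ Set.Icc (ψ 1) (ψ 0) := ⟨hψ1.le, hψ0⟩
      have := intermediate_value_Icc' (by norm_num : (0:ℝ) ≤ 1) hψc.continuousOn h0mem
      obtain ⟨t, ht, htv⟩ := this
      exact ⟨t, ht, htv⟩
    have ht0 : 0 ≤ t := ht01.1
    have ht1 : t ≤ 1 := ht01.2
    have htlt : t < 1 := by
      rcases lt_or_eq_of_le ht1 with h | h
      · exact h
      · exfalso; rw [h] at htz; linarith
    have hXs : X.mulVec (t • β) = t • w := by
      rw [hw, Matrix.mulVec_smul]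
    have hts : topSum k (t • β) = t * topSum k β := topSum_smul hk t ht0 β
    have hfeas0 : lam * topSum k (t • β) = norm2 (y - X.mulVec (t • β)) := by
      have htz' : norm2 (y - t • w) - t * c = 0 := htz
      rw [hXs, hts]
      have hmv : norm2 (y - t • w) = t * c := by linarith
      rw [hmv, hcdef]; ring
    have hrβpos : 0 < r β := by
      rcases lt_or_eq_of_le (hrnn β) with h | h
      · exact h
      · exfalso
        have hβ0 : β = 0 := hr_def β h.symm
        have hc0 : c = 0 := by rw [hcdef, hβ0, htop0, mul_zero]
        have hnn := norm2_nonneg (y - w)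
        rw [hc0] at hβ
        linarith
    refine ⟨t • β, hfeas0.le, ?_⟩
    rw [hfeq _ hfeas0.le, hobj β]
    rw [max_eq_right (by linarith), hr_smul, abs_of_nonneg ht0]
    have : norm2 (y - X.mulVec (t • β)) - lam * topSum k (t • β) = 0 := by
      rw [hfeas0]; ring
    rw [hfeas0]
    have hlt : t * r β < r β := by nlinarith
    linarith
  -- zero is feasible
  have hzero_feas : lam * topSum k (0 : Fin p → ℝ) ≤ norm2 (y - X.mulVec (0 : Fin p → ℝ)) := by
    rw [htop0, mul_zero]
    exact norm2_nonneg _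
  set A := {v : ℝ | ∃ β : Fin p → ℝ, v = minminObj y X k lam r β} with hA
  set B := {v : ℝ | ∃ β : Fin p → ℝ,
      lam * topSum k β ≤ norm2 (y - X.mulVec β) ∧
      v = norm2 (y - X.mulVec β) + r β - lam * topSum k β} with hB
  have hBsubA : B ⊆ A := by
    rintro v ⟨β, hfeas, rfl⟩
    exact ⟨β, (hfeq β hfeas).symm⟩
  have hAbdd : BddBelow A := ⟨0, by rintro v ⟨β, rfl⟩; exact hfnn β⟩
  have hBbdd : BddBelow B := hAbdd.mono hBsubA
  have hBne : B.Nonempty := ⟨_, 0, hzero_feas, rfl⟩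
  have hAne : A.Nonempty := hBne.mono hBsubA
  constructor
  · apply le_antisymm
    · exact csInf_le_csInf hAbdd hBne hBsubA
    · apply le_csInf hAne
      rintro v ⟨β, rfl⟩
      by_cases hfeas : lam * topSum k β ≤ norm2 (y - X.mulVec β)
      · exact csInf_le hBbdd ⟨β, hfeas, hfeq β hfeas⟩
      · push_neg at hfeas
        obtain ⟨β₀, hfeas₀, hlt⟩ := hdom β hfeas
        exact le_trans (csInf_le hBbdd ⟨β₀, hfeas₀, hfeq β₀ hfeas₀⟩) hlt.le
  · ext β
    simp only [Set.mem_setOf_eq]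
    constructor
    · intro hmin
      have hfeas : lam * topSum k β ≤ norm2 (y - X.mulVec β) := by
        by_contra h
        push_neg at h
        obtain ⟨β₀, _, hlt⟩ := hdom β h
        exact absurd (hmin β₀) (not_le.2 hlt)
      refine ⟨hfeas, fun β' hfeas' => ?_⟩
      have := hmin β'
      rw [hfeq β hfeas, hfeq β' hfeas'] at this
      exact this
    · rintro ⟨hfeas, hmin⟩ β'
      by_cases hfeas' : lam * topSum k β' ≤ norm2 (y - X.mulVec β')
      · rw [hfeq β hfeas, hfeq β' hfeas']
        exact hmin β' hfeas'
      · push_neg at hfeas'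
        obtain ⟨β₀, hfeas₀, hlt⟩ := hdom β' hfeas'
        have h1 : minminObj y X k lam r β ≤ minminObj y X k lam r β₀ := by
          rw [hfeq β hfeas, hfeq β₀ hfeas₀]
          exact hmin β₀ hfeas₀
        linarith
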